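/- (Purely imaginary leading eigenvalues at criticality; eigenvalue condition in the proof of Theorem 1.) Suppose d > 0, u ≥ 0, K > 0, and let λ† ∈ σ(A_a), μ† ∈ σ(A_o) generate a leading eigenvalue, i.e., Re(α + γλ† + βμ† + δλ†μ†) = K. Set u* := d/K and ω₀ := Im(γλ† + βμ† + δλ†μ†). Then η(u*, λ†, μ†) = i·u*·ω₀ is a purely imaginary eigenvalue of J(u*), its complex conjugate −i·u*·ω₀ is also an eigenvalue of J(u*), every eigenvalue of J(u*) has real part ≤ 0, and for every real u the map u ↦ Re(η(u, λ†, μ†)) equals K(u − u*), so it crosses zero at u = u* with strictly positive derivative K. -/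

import Mathlib

open Matrix Complex Polynomial
open scoped Kronecker

/-- The complex spectrum of a real square matrix: the set of complex roots of its
characteristic polynomial. -/
noncomputable def specC {n : Type*} [Fintype n] [DecidableEq n]
    (M : Matrix n n ℝ) : Set ℂ :=
  {z : ℂ | ((M.map (Complex.ofReal)).charpoly).IsRoot z}

/-- The Jacobian matrix `J(u)` of the belief dynamics at the origin. -/
noncomputable def Jmat {Na No : ℕ}
    (Aa : Matrix (Fin Na) (Fin Na) ℝ) (Ao : Matrix (Fin No) (Fin No) ℝ)
    (d u α γ β δ : ℝ) : Matrix (Fin Na × Fin No) (Fin Na × Fin No) ℝ :=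
  (-d + u * α) • (1 : Matrix (Fin Na × Fin No) (Fin Na × Fin No) ℝ)
    + (u * γ) • (Aa ⊗ₖ (1 : Matrix (Fin No) (Fin No) ℝ))
    + (u * β) • ((1 : Matrix (Fin Na) (Fin Na) ℝ) ⊗ₖ Ao)
    + (u * δ) • (Aa ⊗ₖ Ao)

/-- The generating map `η(u, λ, μ) = −d + u(α + γλ + βμ + δλμ)`. -/
noncomputable def ηgen (d u α γ β δ : ℝ) (l m : ℂ) : ℂ :=
  -(d : ℂ) + (u : ℂ) * ((α : ℂ) + (γ : ℂ) * l + (β : ℂ) * m + (δ : ℂ) * l * m)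

/-- A complex number is a root of the characteristic polynomial of a complex matrix iff it
admits an eigenvector. -/
lemma isRoot_charpoly_iff_exists {n : Type*} [Fintype n] [DecidableEq n]
    (M : Matrix n n ℂ) (z : ℂ) :
    M.charpoly.IsRoot z ↔ ∃ v : n → ℂ, v ≠ 0 ∧ M *ᵥ v = z • v := by
  have h1 : M.charpoly.eval z = (z • (1 : Matrix n n ℂ) - M).det := by
    rw [Matrix.charpoly, ← Polynomial.coe_evalRingHom, RingHom.map_det]
    congr 1
    ext i j
    rcases eq_or_ne i j with rfl | hij
    · simp [Matrix.charmatrix_apply_eq, Matrix.one_apply, Matrix.smul_apply]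
    · simp [Matrix.charmatrix_apply_ne _ _ _ hij, Matrix.one_apply_ne hij,
        Matrix.smul_apply, hij]
  rw [Polynomial.IsRoot.def, h1, ← Matrix.exists_mulVec_eq_zero_iff]
  constructor
  · rintro ⟨v, hv, hv2⟩
    refine ⟨v, hv, ?_⟩
    rw [Matrix.sub_mulVec, Matrix.smul_mulVec, Matrix.one_mulVec, sub_eq_zero] at hv2
    exact hv2.symm
  · rintro ⟨v, hv, hv2⟩
    refine ⟨v, hv, ?_⟩
    rw [Matrix.sub_mulVec, Matrix.smul_mulVec, Matrix.one_mulVec, hv2, sub_self]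

/-- Membership in the complex spectrum of a real matrix in terms of eigenvectors. -/
lemma mem_specC_iff {n : Type*} [Fintype n] [DecidableEq n] (M : Matrix n n ℝ) (z : ℂ) :
    z ∈ specC M ↔ ∃ v : n → ℂ, v ≠ 0 ∧ (M.map Complex.ofReal) *ᵥ v = z • v :=
  isRoot_charpoly_iff_exists _ z

/-- The Kronecker product acts on "tensor product" vectors componentwise. -/
lemma kron_mulVec {m n : Type*} [Fintype m] [Fintype n]
    (A : Matrix m m ℂ) (B : Matrix n n ℂ) (v : m → ℂ) (w : n → ℂ) :
    (A ⊗ₖ B) *ᵥ (fun p => v p.1 * w p.2) = fun p => (A *ᵥ v) p.1 * (B *ᵥ w) p.2 := by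
  funext p
  simp only [Matrix.mulVec, dotProduct, Fintype.sum_prod_type, Matrix.kroneckerMap_apply]
  rw [Finset.sum_mul_sum]
  exact Finset.sum_congr rfl fun k _ => Finset.sum_congr rfl fun l _ => by ring

/-- An eigenvector of `A ⊗ₖ 1` yields an eigenvector of `A` (a nonzero column slice). -/
lemma left_slice {Na No : ℕ} (Ac : Matrix (Fin Na) (Fin Na) ℂ)
    (v : Fin Na × Fin No → ℂ) (l : ℂ) (hv : v ≠ 0)
    (h : (Ac ⊗ₖ (1 : Matrix (Fin No) (Fin No) ℂ)) *ᵥ v = l • v) :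
    ∃ w : Fin Na → ℂ, w ≠ 0 ∧ Ac *ᵥ w = l • w := by
  obtain ⟨p, hp⟩ := Function.ne_iff.mp hv
  refine ⟨fun i => v (i, p.2), fun hw => hp ?_, ?_⟩
  · have := congrFun hw p.1
    simpa using this
  · funext i
    have := congrFun h (i, p.2)
    simp only [Matrix.mulVec, dotProduct, Fintype.sum_prod_type,
      Matrix.kroneckerMap_apply, Matrix.one_apply, mul_ite, mul_one, mul_zero, ite_mul, zero_mul,
      Finset.sum_ite_eq, Finset.mem_univ, if_true, Pi.smul_apply, smul_eq_mul] at this ⊢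
    exact this

/-- An eigenvector of `1 ⊗ₖ B` yields an eigenvector of `B` (a nonzero row slice). -/
lemma right_slice {Na No : ℕ} (Bc : Matrix (Fin No) (Fin No) ℂ)
    (v : Fin Na × Fin No → ℂ) (l : ℂ) (hv : v ≠ 0)
    (h : ((1 : Matrix (Fin Na) (Fin Na) ℂ) ⊗ₖ Bc) *ᵥ v = l • v) :
    ∃ w : Fin No → ℂ, w ≠ 0 ∧ Bc *ᵥ w = l • w := by
  obtain ⟨p, hp⟩ := Function.ne_iff.mp hv
  refine ⟨fun j => v (p.1, j), fun hw => hp ?_, ?_⟩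
  · have := congrFun hw p.2
    simpa using this
  · funext j
    have := congrFun h (p.1, j)
    simp only [Matrix.mulVec, dotProduct, Fintype.sum_prod_type,
      Matrix.kroneckerMap_apply, Matrix.one_apply, mul_ite, mul_one, mul_zero, ite_mul, zero_mul,
      Finset.mem_univ, Pi.smul_apply, smul_eq_mul] at this ⊢
    rw [Finset.sum_comm] at this
    simp only [Finset.sum_ite_eq, Finset.mem_univ, if_true, one_mul] at this
    exact this

/-- The complexification of the Jacobian, in Kronecker form. -/
lemma Jc_eq {Na No : ℕ} (Aa : Matrix (Fin Na) (Fin Na) ℝ) (Ao : Matrix (Fin No) (Fin No) ℝ)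
    (d u α γ β δ : ℝ) :
    (Jmat Aa Ao d u α γ β δ).map Complex.ofReal
      = ((-d + u*α : ℝ) : ℂ) • (1 : Matrix (Fin Na × Fin No) (Fin Na × Fin No) ℂ)
        + ((u*γ : ℝ) : ℂ) • ((Aa.map Complex.ofReal) ⊗ₖ (1 : Matrix (Fin No) (Fin No) ℂ))
        + ((u*β : ℝ) : ℂ) • ((1 : Matrix (Fin Na) (Fin Na) ℂ) ⊗ₖ (Ao.map Complex.ofReal))
        + ((u*δ : ℝ) : ℂ) • ((Aa.map Complex.ofReal) ⊗ₖ (Ao.map Complex.ofReal)) := by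
  ext ⟨i,j⟩ ⟨k,l⟩
  simp only [Jmat, Matrix.map_apply, Matrix.add_apply, Matrix.smul_apply,
    Matrix.kroneckerMap_apply, Matrix.one_apply, Prod.mk.injEq, smul_eq_mul]
  push_cast
  split_ifs <;> simp_all

/-- Real matrices have conjugation-stable complex eigenvector equations. -/
lemma conj_mulVec {n : Type*} [Fintype n] (M : Matrix n n ℝ) (z : ℂ) (v : n → ℂ)
    (h : (M.map Complex.ofReal) *ᵥ v = z • v) :
    (M.map Complex.ofReal) *ᵥ (fun i => (starRingEnd ℂ) (v i))
      = (starRingEnd ℂ) z • fun i => (starRingEnd ℂ) (v i) := by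
  funext i
  have := congrFun h i
  simp only [Matrix.mulVec, dotProduct, Matrix.map_apply, Pi.smul_apply,
    smul_eq_mul] at this ⊢
  calc ∑ j, (Complex.ofReal (M i j)) * (starRingEnd ℂ) (v j)
      = (starRingEnd ℂ) (∑ j, (Complex.ofReal (M i j)) * v j) := by
        simp [map_sum, Complex.conj_ofReal]
    _ = (starRingEnd ℂ) (z * v i) := by rw [this]
    _ = _ := by simp

/-- Any nontrivial invariant subspace of a finite-dimensional complex vector space contains an
eigenvector of any endomorphism preserving it. -/
lemma exists_eigen_restrict {V : Type*} [AddCommGroup V] [Module ℂ V] [FiniteDimensional ℂ V]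
    (f : Module.End ℂ V) (p : Submodule ℂ V) (hp : p ≠ ⊥) (hfp : ∀ x ∈ p, f x ∈ p) :
    ∃ c : ℂ, ∃ v, v ∈ p ∧ v ≠ 0 ∧ f v = c • v := by
  haveI : Nontrivial p := Submodule.nontrivial_iff_ne_bot.mpr hp
  obtain ⟨c, hc⟩ := Module.End.exists_eigenvalue (LinearMap.restrict f hfp)
  obtain ⟨⟨v, hvp⟩, hv⟩ := hc.exists_hasEigenvector
  refine ⟨c, v, hvp, by simpa [Subtype.ext_iff] using hv.right, ?_⟩
  have h2 := congrArg Subtype.val (Module.End.mem_eigenspace_iff.mp hv.left)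
  simpa [LinearMap.restrict_apply] using h2

/-- Purely imaginary leading eigenvalues at criticality: if `λ†, μ†` generate a leading
eigenvalue (`Re(α + γλ† + βμ† + δλ†μ†) = K > 0`), then at `u* = d/K` the eigenvalue
`η(u*, λ†, μ†) = i u* ω₀` of `J(u*)` is purely imaginary, its conjugate is also an
eigenvalue of `J(u*)`, every eigenvalue of `J(u*)` has nonpositive real part, and
`Re(η(u, λ†, μ†)) = K (u − u*)` crosses zero at `u = u*` with derivative `K > 0`. -/
theorem critical_imaginary_eigenvalues {Na No : ℕ} (hNa : 1 ≤ Na) (hNo : 1 ≤ No)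
    (Aa : Matrix (Fin Na) (Fin Na) ℝ) (Ao : Matrix (Fin No) (Fin No) ℝ)
    (d α γ β δ K : ℝ) (hd : 0 < d)
    (hK : IsGreatest {x : ℝ | ∃ l ∈ specC Aa, ∃ m ∈ specC Ao,
        x = ((α : ℂ) + (γ : ℂ) * l + (β : ℂ) * m + (δ : ℂ) * l * m).re} K)
    (hKpos : 0 < K)
    (lamd : ℂ) (mud : ℂ) (hlamd : lamd ∈ specC Aa) (hmud : mud ∈ specC Ao)
    (hgen : ((α : ℂ) + (γ : ℂ) * lamd + (β : ℂ) * mud + (δ : ℂ) * lamd * mud).re = K) :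
    ηgen d (d / K) α γ β δ lamd mud
        = Complex.I * ((d / K) * ((γ : ℂ) * lamd + (β : ℂ) * mud
            + (δ : ℂ) * lamd * mud).im) ∧
    ηgen d (d / K) α γ β δ lamd mud ∈ specC (Jmat Aa Ao d (d / K) α γ β δ) ∧
    (starRingEnd ℂ) (ηgen d (d / K) α γ β δ lamd mud)
        ∈ specC (Jmat Aa Ao d (d / K) α γ β δ) ∧
    (∀ η ∈ specC (Jmat Aa Ao d (d / K) α γ β δ), η.re ≤ 0) ∧
    (∀ u : ℝ, (ηgen d u α γ β δ lamd mud).re = K * (u - d / K)) ∧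
    HasDerivAt (fun u : ℝ => (ηgen d u α γ β δ lamd mud).re) K (d / K) := by
  have hKne : K ≠ 0 := ne_of_gt hKpos
  set u : ℝ := d / K with hu
  have hupos : 0 < u := div_pos hd hKpos
  -- real part of η as affine function of u
  have hre : ∀ v : ℝ, (ηgen d v α γ β δ lamd mud).re = K * (v - d / K) := by
    intro v
    have h2 : (ηgen d v α γ β δ lamd mud).re
        = -d + v * ((α : ℂ) + (γ : ℂ) * lamd + (β : ℂ) * mud
            + (δ : ℂ) * lamd * mud).re := by
      simp [ηgen, Complex.add_re, Complex.mul_re]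
    rw [h2, hgen]
    field_simp
    ring
  -- complex matrices
  set Ac := Aa.map Complex.ofReal with hAc
  set Bc := Ao.map Complex.ofReal with hBc
  set Jc := (Jmat Aa Ao d u α γ β δ).map Complex.ofReal with hJcdef
  set Pm := Ac ⊗ₖ (1 : Matrix (Fin No) (Fin No) ℂ) with hPm
  set Qm := (1 : Matrix (Fin Na) (Fin Na) ℂ) ⊗ₖ Bc with hQm
  have hJc : Jc = ((-d + u*α : ℝ) : ℂ) • (1 : Matrix (Fin Na × Fin No) (Fin Na × Fin No) ℂ)
      + ((u*γ : ℝ) : ℂ) • Pm + ((u*β : ℝ) : ℂ) • Qm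
      + ((u*δ : ℝ) : ℂ) • (Ac ⊗ₖ Bc) := Jc_eq Aa Ao d u α γ β δ
  have hABPQ : Ac ⊗ₖ Bc = Pm * Qm := by
    rw [hPm, hQm, ← Matrix.mul_kronecker_mul, Matrix.mul_one, Matrix.one_mul]
  have hPQ : Pm * Qm = Qm * Pm := by
    rw [hPm, hQm, ← Matrix.mul_kronecker_mul, ← Matrix.mul_kronecker_mul]
    simp
  -- key: joint eigenvectors of Pm, Qm are eigenvectors of Jc
  have hmulJ : ∀ (v : Fin Na × Fin No → ℂ) (l m : ℂ), Pm *ᵥ v = l • v → Qm *ᵥ v = m • v →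
      Jc *ᵥ v = (ηgen d u α γ β δ l m) • v := by
    intro v l m hP hQ
    have hAB : (Ac ⊗ₖ Bc) *ᵥ v = (l * m) • v := by
      rw [hABPQ, ← Matrix.mulVec_mulVec, hQ, Matrix.mulVec_smul, hP, smul_smul, mul_comm]
    rw [hJc, Matrix.add_mulVec, Matrix.add_mulVec, Matrix.add_mulVec,
      Matrix.smul_mulVec, Matrix.smul_mulVec, Matrix.smul_mulVec,
      Matrix.smul_mulVec, Matrix.one_mulVec, hP, hQ, hAB]
    funext p
    simp only [ηgen, Pi.add_apply, Pi.smul_apply, smul_eq_mul]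
    push_cast
    ring
  -- eigenvectors for lamd, mud
  obtain ⟨va, hva, hAva⟩ := (mem_specC_iff Aa lamd).mp hlamd
  obtain ⟨vo, hvo, hBvo⟩ := (mem_specC_iff Ao mud).mp hmud
  set v0 : Fin Na × Fin No → ℂ := fun p => va p.1 * vo p.2 with hv0def
  obtain ⟨ia, hia⟩ := Function.ne_iff.mp hva
  obtain ⟨jo, hjo⟩ := Function.ne_iff.mp hvo
  have hv0 : v0 ≠ 0 := fun h => by
    have := congrFun h (ia, jo)
    simp only [hv0def, Pi.zero_apply, mul_eq_zero] at this
    tauto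
  have hPv0 : Pm *ᵥ v0 = lamd • v0 := by
    rw [hPm, hv0def, kron_mulVec, hAva, Matrix.one_mulVec]
    funext p; simp [mul_assoc]
  have hQv0 : Qm *ᵥ v0 = mud • v0 := by
    rw [hQm, hv0def, kron_mulVec, hBvo, Matrix.one_mulVec]
    funext p
    simp only [Pi.smul_apply, smul_eq_mul]
    ring
  have hJv0 : Jc *ᵥ v0 = (ηgen d u α γ β δ lamd mud) • v0 := hmulJ v0 lamd mud hPv0 hQv0
  refine ⟨?_, ?_, ?_, ?_, hre, ?_⟩
  · -- purely imaginary
    apply Complex.ext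
    · rw [hre u, hu]
      simp [Complex.mul_re]
    · simp only [ηgen, Complex.add_im, Complex.neg_im, Complex.ofReal_im, neg_zero,
        Complex.mul_im, Complex.ofReal_re, Complex.mul_re, Complex.I_re, Complex.I_im,
        Complex.add_re, Complex.ofReal_re]
      ring_nf
      simp [Complex.mul_im, Complex.ofReal_im]
      ring_nf
      rw [hu]
      ring
  · exact (mem_specC_iff _ _).mpr ⟨v0, hv0, hJv0⟩
  · -- conjugate eigenvalue
    refine (mem_specC_iff _ _).mpr ⟨fun p => (starRingEnd ℂ) (v0 p), ?_, conj_mulVec _ _ _ hJv0⟩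
    intro h
    apply hv0
    funext p
    have := congrFun h p
    simpa using this
  · -- all eigenvalues have nonpositive real part
    intro z hz
    obtain ⟨w0, hw0, hJw0⟩ := (mem_specC_iff _ _).mp hz
    set fJ := Matrix.mulVecLin Jc with hfJ
    set fP := Matrix.mulVecLin Pm with hfP
    set fQ := Matrix.mulVecLin Qm with hfQ
    have cPQ : Commute Pm Qm := hPQ
    have cJP : Commute Jc Pm := by
      rw [hJc, hABPQ]
      exact Commute.add_left (Commute.add_left (Commute.add_left
        ((Commute.one_left Pm).smul_left _)
        ((Commute.refl Pm).smul_left _))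
        (cPQ.symm.smul_left _))
        (((Commute.refl Pm).mul_left cPQ.symm).smul_left _)
    have cJQ : Commute Jc Qm := by
      rw [hJc, hABPQ]
      exact Commute.add_left (Commute.add_left (Commute.add_left
        ((Commute.one_left Qm).smul_left _)
        (cPQ.smul_left _))
        ((Commute.refl Qm).smul_left _))
        ((cPQ.mul_left (Commute.refl Qm)).smul_left _)
    set p1 := Module.End.eigenspace fJ z with hp1def
    have hp1 : p1 ≠ ⊥ := (Submodule.ne_bot_iff _).mpr
      ⟨w0, Module.End.mem_eigenspace_iff.mpr
        (by simpa [hfJ, Matrix.mulVecLin_apply] using hJw0), hw0⟩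
    have hmapP : ∀ x ∈ p1, fP x ∈ p1 := by
      intro x hx
      rw [hp1def, Module.End.mem_eigenspace_iff] at hx ⊢
      have hcomm : fJ (fP x) = fP (fJ x) := by
        simp only [hfJ, hfP, Matrix.mulVecLin_apply, Matrix.mulVec_mulVec]
        rw [cJP.eq]
      rw [hcomm, hx]; exact _root_.map_smul _ _ _
    obtain ⟨l, v1, hv1p, hv1ne, hPv1⟩ := exists_eigen_restrict fP p1 hp1 hmapP
    set p2 := p1 ⊓ Module.End.eigenspace fP l with hp2def
    have hp2 : p2 ≠ ⊥ := (Submodule.ne_bot_iff _).mpr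
      ⟨v1, Submodule.mem_inf.mpr ⟨hv1p, Module.End.mem_eigenspace_iff.mpr hPv1⟩, hv1ne⟩
    have hmapQ : ∀ x ∈ p2, fQ x ∈ p2 := by
      intro x hx
      rw [hp2def, Submodule.mem_inf] at hx ⊢
      obtain ⟨hx1, hx2⟩ := hx
      rw [hp1def, Module.End.mem_eigenspace_iff] at hx1
      rw [Module.End.mem_eigenspace_iff] at hx2
      constructor
      · rw [hp1def, Module.End.mem_eigenspace_iff]
        have hcomm : fJ (fQ x) = fQ (fJ x) := by
          simp only [hfJ, hfQ, Matrix.mulVecLin_apply, Matrix.mulVec_mulVec]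
          rw [cJQ.eq]
        rw [hcomm, hx1]; exact _root_.map_smul _ _ _
      · rw [Module.End.mem_eigenspace_iff]
        have hcomm : fP (fQ x) = fQ (fP x) := by
          simp only [hfP, hfQ, Matrix.mulVecLin_apply, Matrix.mulVec_mulVec]
          rw [cPQ.eq]
        rw [hcomm, hx2]; exact _root_.map_smul _ _ _
    obtain ⟨m, v2, hv2p, hv2ne, hQv2⟩ := exists_eigen_restrict fQ p2 hp2 hmapQ
    rw [hp2def, Submodule.mem_inf] at hv2p
    obtain ⟨hv2J, hv2P⟩ := hv2p
    rw [hp1def, Module.End.mem_eigenspace_iff] at hv2J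
    rw [Module.End.mem_eigenspace_iff] at hv2P
    have hJv2 : Jc *ᵥ v2 = z • v2 := by simpa [hfJ, Matrix.mulVecLin_apply] using hv2J
    have hPv2 : Pm *ᵥ v2 = l • v2 := by simpa [hfP, Matrix.mulVecLin_apply] using hv2P
    have hQv2m : Qm *ᵥ v2 = m • v2 := by simpa [hfQ, Matrix.mulVecLin_apply] using hQv2
    have hzη : z = ηgen d u α γ β δ l m := by
      have h := hJv2.symm.trans (hmulJ v2 l m hPv2 hQv2m)
      have h2 : (z - ηgen d u α γ β δ l m) • v2 = 0 := by
        rw [sub_smul, h, sub_self]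
      rcases smul_eq_zero.mp h2 with h3 | h3
      · exact sub_eq_zero.mp h3
      · exact absurd h3 hv2ne
    obtain ⟨wa, hwa, hAwa⟩ := left_slice Ac v2 l hv2ne hPv2
    obtain ⟨wo, hwo, hBwo⟩ := right_slice Bc v2 m hv2ne hQv2m
    have hl : l ∈ specC Aa := (mem_specC_iff Aa l).mpr ⟨wa, hwa, hAwa⟩
    have hm : m ∈ specC Ao := (mem_specC_iff Ao m).mpr ⟨wo, hwo, hBwo⟩
    have hbound : ((α : ℂ) + (γ : ℂ) * l + (β : ℂ) * m + (δ : ℂ) * l * m).re ≤ K :=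
      hK.2 ⟨l, hl, m, hm, rfl⟩
    have hzre : z.re = -d + u * ((α : ℂ) + (γ : ℂ) * l + (β : ℂ) * m
        + (δ : ℂ) * l * m).re := by
      rw [hzη]
      simp [ηgen, Complex.add_re, Complex.mul_re]
    rw [hzre]
    have : u * ((α : ℂ) + (γ : ℂ) * l + (β : ℂ) * m + (δ : ℂ) * l * m).re ≤ u * K :=
      mul_le_mul_of_nonneg_left hbound (le_of_lt hupos)
    have huK : u * K = d := by
      rw [hu]; field_simp
    linarith
  · -- derivative
    have heq : (fun v : ℝ => (ηgen d v α γ β δ lamd mud).re)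
        = fun v : ℝ => K * (v - d / K) := funext hre
    rw [heq]
    simpa using ((hasDerivAt_id (d / K)).sub_const (d / K)).const_mul K
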